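/- Let A be an abelian group and n, p ≥ 0. Define a map Z^n(Δ_p; A) → Z^{n+1}(Δ_{p+1}; A) sending a normalized n-cocycle α to the cochain β given on an (n+1)-simplex θ : [n+1] → [p+1] of Δ_{p+1} by: β(θ) = α(θ′) if θ(0) = 0 and θ(1) ≥ 1, where θ′ : [n] → [p] is defined by θ′(i) = θ(i+1) − 1; and β(θ) = 0 otherwise. Then β is indeed a normalized (n+1)-cocycle, and this map is a bijection from Z^n(Δ_p; A) onto the set of β ∈ Z^{n+1}(Δ_{p+1}; A) whose pullback along the 0th coface map d^0 : Δ_p → Δ_{p+1} is zero. (This is the statement that the structure maps K(A,n) → Ω K(A,n+1) of the Eilenberg–MacLane spectrum are isomorphisms.) -/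

import Mathlib

/-! Statement 16: the structure maps `K(A,n) → Ω K(A,n+1)` of the Eilenberg–MacLane spectrum
are isomorphisms, expressed in terms of normalized simplicial cocycles on standard simplices. -/

open Function

/-- The `m`-simplices of the standard `p`-simplex `Δ_p`: order-preserving maps `[m] → [p]`. -/
abbrev Smp (m p : ℕ) : Type := Fin (m + 1) →o Fin (p + 1)

/-- The `i`-th coface map `δ_i : [m] → [m+1]`, as an order-preserving map. -/
def coface {m : ℕ} (i : Fin (m + 2)) : Fin (m + 1) →o Fin (m + 2) :=
  (Fin.succAboveOrderEmb i).toOrderHom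

variable {A : Type} [AddCommGroup A]

/-- The simplicial coboundary of an `m`-cochain on `Δ_p`:
`(dα)(θ) = Σ_{i=0}^{m+1} (−1)^i α(d_i θ)`. -/
def cobdry {m p : ℕ} (α : Smp m p → A) : Smp (m + 1) p → A :=
  fun θ => ∑ i : Fin (m + 2), ((-1 : ℤ) ^ (i : ℕ)) • α (θ.comp (coface i))

/-- A cochain is normalized if it vanishes on degenerate (non-injective) simplices. -/
def IsNorm {m p : ℕ} (α : Smp m p → A) : Prop := ∀ θ : Smp m p, ¬ Injective θ → α θ = 0

/-- The set `Z^m(Δ_p; A)` of normalized `m`-cocycles on `Δ_p`. -/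
def Zset (A : Type) [AddCommGroup A] (m p : ℕ) : Set (Smp m p → A) :=
  {α | IsNorm α ∧ ∀ θ : Smp (m + 1) p, cobdry α θ = 0}

/-- The map `[n] → [p]`, `i ↦ θ(i+1) − 1`, associated to `θ : [n+1] → [p+1]`
(with truncated subtraction). -/
def shrink {n p : ℕ} (θ : Smp (n + 1) (p + 1)) : Smp n p where
  toFun i := ⟨(θ i.succ : ℕ) - 1, by have := (θ i.succ).isLt; omega⟩
  monotone' := by
    intro i j hij
    simp only [Fin.mk_le_mk]
    exact Nat.sub_le_sub_right (θ.monotone (Fin.succ_le_succ_iff.mpr hij)) 1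

/-- The structure map: a normalized `n`-cocycle `α` on `Δ_p` is sent to the `(n+1)`-cochain
`β` on `Δ_{p+1}` with `β(θ) = α(θ′)` if `θ(0) = 0` and `θ(1) ≥ 1` (where `θ′(i) = θ(i+1) − 1`),
and `β(θ) = 0` otherwise. -/
def emStruc {n p : ℕ} (α : Smp n p → A) : Smp (n + 1) (p + 1) → A :=
  fun θ => if θ 0 = 0 ∧ θ 1 ≠ 0 then α (shrink θ) else 0

/-! ### Auxiliary material -/

lemma coface_apply {m : ℕ} (i : Fin (m + 2)) (x : Fin (m + 1)) :
    coface i x = i.succAbove x := rfl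

lemma comp_coface_apply {m p : ℕ} (θ : Smp (m + 1) p) (i : Fin (m + 2)) (x : Fin (m + 1)) :
    (θ.comp (coface i)) x = θ (i.succAbove x) := rfl

/-- The cone of `σ : [n] → [p]`: `0 ↦ 0`, `i+1 ↦ σ(i)+1`. -/
def cone {n p : ℕ} (σ : Smp n p) : Smp (n + 1) (p + 1) where
  toFun := Fin.cases 0 (fun k => (σ k).succ)
  monotone' := by
    intro i j hij
    rcases Fin.eq_zero_or_eq_succ i with rfl | ⟨a, rfl⟩
    · exact Fin.zero_le _
    · rcases Fin.eq_zero_or_eq_succ j with rfl | ⟨b, rfl⟩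
      · exact absurd hij (by simp [Fin.le_def])
      · simp only [Fin.cases_succ]
        exact Fin.succ_le_succ_iff.mpr (σ.monotone (Fin.succ_le_succ_iff.mp hij))

@[simp] lemma cone_zero {n p : ℕ} (σ : Smp n p) : cone σ 0 = 0 := rfl

@[simp] lemma cone_succ {n p : ℕ} (σ : Smp n p) (k : Fin (n + 1)) :
    cone σ k.succ = (σ k).succ := by
  rfl

lemma shrink_val {n p : ℕ} (θ : Smp (n + 1) (p + 1)) (i : Fin (n + 1)) :
    (shrink θ i : ℕ) = (θ i.succ : ℕ) - 1 := rfl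

lemma one_eq_succ_zero {m : ℕ} : (1 : Fin (m + 2)) = (0 : Fin (m + 1)).succ := rfl

lemma shrink_cone {n p : ℕ} (σ : Smp n p) : shrink (cone σ) = σ := by
  apply OrderHom.ext; funext i
  apply Fin.ext
  rw [shrink_val, cone_succ, Fin.val_succ]
  omega

lemma theta_succ_ne {m p : ℕ} (θ : Smp (m + 1) (p + 1)) (h1 : θ 1 ≠ 0)
    (k : Fin (m + 1)) : θ k.succ ≠ 0 := by
  have hm : θ 1 ≤ θ k.succ := θ.monotone (by
    rw [one_eq_succ_zero]; exact Fin.succ_le_succ_iff.mpr (Fin.zero_le _))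
  have h1v : (θ 1 : ℕ) ≠ 0 := fun hc => h1 (Fin.ext hc)
  intro hc
  have : (θ k.succ : ℕ) = 0 := by rw [hc]; rfl
  have := Fin.le_def.mp hm
  omega

lemma cone_shrink {n p : ℕ} (θ : Smp (n + 1) (p + 1)) (h0 : θ 0 = 0) (h1 : θ 1 ≠ 0) :
    cone (shrink θ) = θ := by
  apply OrderHom.ext; funext i
  rcases Fin.eq_zero_or_eq_succ i with rfl | ⟨k, rfl⟩
  · rw [cone_zero, h0]
  · apply Fin.ext
    rw [cone_succ, Fin.val_succ, shrink_val]
    have hne : (θ k.succ : ℕ) ≠ 0 := fun hc => theta_succ_ne θ h1 k (Fin.ext hc)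
    omega

lemma emStruc_cone {n p : ℕ} (α : Smp n p → A) (σ : Smp n p) :
    emStruc α (cone σ) = α σ := by
  rw [emStruc, if_pos, shrink_cone]
  refine ⟨cone_zero σ, ?_⟩
  rw [one_eq_succ_zero, cone_succ]
  exact Fin.succ_ne_zero _

lemma cone_comp_coface_succ {n p : ℕ} (σ : Smp (n + 1) p) (i : Fin (n + 2)) :
    (cone σ).comp (coface i.succ) = cone (σ.comp (coface i)) := by
  apply OrderHom.ext; funext j
  rcases Fin.eq_zero_or_eq_succ j with rfl | ⟨k, rfl⟩
  · show cone σ (i.succ.succAbove 0) = _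
    rw [Fin.succ_succAbove_zero]
    rfl
  · show cone σ (i.succ.succAbove k.succ) = _
    rw [Fin.succ_succAbove_succ, cone_succ, cone_succ]
    rfl

lemma shrink_comp_coface {n p : ℕ} (θ : Smp (n + 2) (p + 1)) (i : Fin (n + 2)) :
    shrink (θ.comp (coface i.succ)) = (shrink θ).comp (coface i) := by
  apply OrderHom.ext; funext j
  apply Fin.ext
  show ((θ.comp (coface i.succ)) j.succ : ℕ) - 1 = ((shrink θ) (i.succAbove j) : ℕ)
  rw [comp_coface_apply, Fin.succ_succAbove_succ, shrink_val]

lemma cone_comp_coface_zero {n p : ℕ} (σ : Smp (n + 1) p) :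
    (cone σ).comp (coface 0) = (coface 0).comp σ := by
  apply OrderHom.ext; funext j
  show cone σ ((0 : Fin (n + 3)).succAbove j) = (0 : Fin (p + 2)).succAbove (σ j)
  rw [Fin.zero_succAbove, Fin.zero_succAbove, cone_succ]

lemma comp_coface_succ_zero {m p : ℕ} (θ : Smp (m + 1) p) (i : Fin (m + 1)) :
    (θ.comp (coface i.succ)) 0 = θ 0 := by
  rw [comp_coface_apply, Fin.succ_succAbove_zero]

lemma comp_coface_succ_one {m p : ℕ} (θ : Smp (m + 2) p) (i : Fin (m + 2)) :
    (θ.comp (coface i.succ)) 1 = θ (i.succAbove 0).succ := by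
  rw [comp_coface_apply, one_eq_succ_zero, Fin.succ_succAbove_succ]

lemma theta_ne_zero {m p : ℕ} (θ : Smp m (p + 1)) (h0 : θ 0 ≠ 0) (x : Fin (m + 1)) :
    θ x ≠ 0 := by
  have hm := Fin.le_def.mp (θ.monotone (Fin.zero_le x))
  have h0v : (θ 0 : ℕ) ≠ 0 := fun hc => h0 (Fin.ext hc)
  intro hc
  have : (θ x : ℕ) = 0 := by rw [hc]; rfl
  omega

lemma not_inj_cone {n p : ℕ} (σ : Smp n p) (h : ¬ Injective σ) : ¬ Injective (cone σ) := by
  rw [Injective] at h; push_neg at h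
  obtain ⟨a, b, hab, hne⟩ := h
  intro hinj
  apply hne
  have : cone σ a.succ = cone σ b.succ := by rw [cone_succ, cone_succ, hab]
  exact Fin.succ_injective _ (hinj this)

lemma not_inj_shrink {n p : ℕ} (θ : Smp (n + 1) (p + 1)) (h0 : θ 0 = 0) (h1 : θ 1 ≠ 0)
    (h : ¬ Injective θ) : ¬ Injective (shrink θ) := by
  rw [Injective] at h; push_neg at h
  obtain ⟨a, b, hab, hne⟩ := h
  have key : ∀ x : Fin (n + 2), x ≠ 0 → θ x ≠ 0 := by
    intro x hx
    rcases Fin.eq_zero_or_eq_succ x with rfl | ⟨k, rfl⟩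
    · exact absurd rfl hx
    · exact theta_succ_ne θ h1 k
  have ha : a ≠ 0 := by
    rintro rfl
    rcases Fin.eq_zero_or_eq_succ b with rfl | ⟨k, rfl⟩
    · exact hne rfl
    · exact theta_succ_ne θ h1 k (by rw [← hab, h0])
  have hb : b ≠ 0 := by
    rintro rfl
    rcases Fin.eq_zero_or_eq_succ a with rfl | ⟨k, rfl⟩
    · exact hne rfl
    · exact theta_succ_ne θ h1 k (by rw [hab, h0])
  obtain ⟨a', rfl⟩ := Fin.exists_succ_eq.mpr ha
  obtain ⟨b', rfl⟩ := Fin.exists_succ_eq.mpr hb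
  intro hinj
  apply hne
  have : shrink θ a' = shrink θ b' := by
    apply Fin.ext
    rw [shrink_val, shrink_val, hab]
  rw [hinj this]

lemma sum_succ_sign {N : ℕ} (f : Fin (N + 1) → A) :
    ∑ i : Fin (N + 1), ((-1 : ℤ) ^ ((i.succ : Fin (N + 2)) : ℕ)) • f i
      = - ∑ i : Fin (N + 1), ((-1 : ℤ) ^ (i : ℕ)) • f i := by
  rw [← Finset.sum_neg_distrib]
  apply Finset.sum_congr rfl
  intro i _
  rw [Fin.val_succ, pow_succ, mul_smul, neg_one_zsmul, smul_neg]

/-- `i ↦ θ(i) − 1` (truncated), for `θ : [m] → [p+1]`. -/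
def predHom {m p : ℕ} (θ : Smp m (p + 1)) : Smp m p where
  toFun i := ⟨(θ i : ℕ) - 1, by have := (θ i).isLt; omega⟩
  monotone' := by
    intro i j hij
    simp only [Fin.mk_le_mk]
    exact Nat.sub_le_sub_right (θ.monotone hij) 1

lemma coface_zero_comp_predHom {m p : ℕ} (θ : Smp m (p + 1)) (h0 : θ 0 ≠ 0) :
    (coface (0 : Fin (p + 2))).comp (predHom θ) = θ := by
  apply OrderHom.ext; funext i
  apply Fin.ext
  show (((0 : Fin (p + 2)).succAbove (predHom θ i)) : ℕ) = (θ i : ℕ)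
  rw [Fin.zero_succAbove, Fin.val_succ]
  show ((θ i : ℕ) - 1) + 1 = (θ i : ℕ)
  have : (θ i : ℕ) ≠ 0 := fun hc => theta_ne_zero θ h0 i (Fin.ext hc)
  omega

/-- The key cocycle property of `emStruc α`. -/
lemma emStruc_cobdry {n p : ℕ} (α : Smp n p → A) (hnorm : IsNorm α)
    (hcoc : ∀ ψ : Smp (n + 1) p, cobdry α ψ = 0) (θ : Smp (n + 2) (p + 1)) :
    cobdry (emStruc α) θ = 0 := by
  by_cases h0 : θ 0 = 0
  · by_cases h1 : θ 1 = 0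
    · -- θ(0) = θ(1) = 0: the first two faces coincide, the rest vanish.
      rw [cobdry, Fin.sum_univ_succ, Fin.sum_univ_succ]
      simp only [Fin.succ_zero_eq_one]
      have hrest : ∀ i : Fin (n + 1),
          emStruc α (θ.comp (coface (m := n + 1) ((i.succ).succ))) = 0 := by
        intro i
        rw [emStruc, if_neg]
        rintro ⟨-, hc⟩
        apply hc
        rw [comp_coface_succ_one, Fin.succ_succAbove_zero, ← one_eq_succ_zero]
        exact h1
      have heq : θ.comp (coface (m := n + 1) (0 : Fin (n + 3)))
          = θ.comp (coface (m := n + 1) (1 : Fin (n + 3))) := by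
        apply OrderHom.ext; funext j
        rcases Fin.eq_zero_or_eq_succ j with rfl | ⟨k, rfl⟩
        · rw [comp_coface_apply, comp_coface_apply, Fin.zero_succAbove,
            Fin.one_succAbove_zero, ← one_eq_succ_zero, h1, h0]
        · rw [comp_coface_apply, comp_coface_apply, Fin.zero_succAbove,
            Fin.one_succAbove_succ]
      have hsum : ∑ i : Fin (n + 1),
          ((-1 : ℤ) ^ (((i.succ).succ) : ℕ)) •
            emStruc α (θ.comp (coface (m := n + 1) ((i.succ).succ))) = 0 := by
        apply Finset.sum_eq_zero
        intro i _
        rw [hrest, smul_zero]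
      rw [hsum, heq]
      simp
    · -- θ(0) = 0, θ(1) ≠ 0: reduces to the cocycle property of α.
      rw [cobdry, Fin.sum_univ_succ]
      have e0 : emStruc α (θ.comp (coface 0)) = 0 := by
        rw [emStruc, if_neg]
        rintro ⟨hc, -⟩
        apply h1
        rw [comp_coface_apply, Fin.zero_succAbove, ← one_eq_succ_zero] at hc
        exact hc
      have erest : ∀ i : Fin (n + 2),
          emStruc α (θ.comp (coface (m := n + 1) i.succ)) = α ((shrink θ).comp (coface i)) := by
        intro i
        rw [emStruc, if_pos, shrink_comp_coface]
        refine ⟨by rw [comp_coface_succ_zero]; exact h0, ?_⟩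
        rw [comp_coface_succ_one]
        exact theta_succ_ne θ h1 _
      simp only [erest, e0, smul_zero, zero_add]
      rw [sum_succ_sign]
      have := hcoc (shrink θ)
      rw [cobdry] at this
      rw [this, neg_zero]
  · -- θ(0) ≠ 0: every face misses 0, so every term vanishes.
    rw [cobdry]
    apply Finset.sum_eq_zero
    intro i _
    rw [emStruc, if_neg, smul_zero]
    rintro ⟨hc, -⟩
    exact theta_ne_zero θ h0 _ (by rw [← comp_coface_apply]; exact hc)

/-- **Statement 16.** The map `α ↦ β` above is well defined (i.e. sends normalized `n`-cocycles
on `Δ_p` to normalized `(n+1)`-cocycles on `Δ_{p+1}`) and is a bijection from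
`Z^n(Δ_p; A)` onto the set of `β ∈ Z^{n+1}(Δ_{p+1}; A)` whose pullback along the `0`-th coface
map `d^0 : Δ_p → Δ_{p+1}` is zero. -/
theorem statement16 (A : Type) [AddCommGroup A] (n p : ℕ) :
    Set.BijOn (emStruc (A := A)) (Zset A n p)
      {β ∈ Zset A (n + 1) (p + 1) | ∀ φ : Smp (n + 1) p,
        β ((coface (0 : Fin (p + 2))).comp φ) = 0} := by
  refine ⟨?_, ?_, ?_⟩
  · -- MapsTo
    rintro α ⟨hnorm, hcoc⟩
    refine ⟨⟨?_, emStruc_cobdry α hnorm hcoc⟩, ?_⟩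
    · -- normalization
      intro θ hθ
      rw [emStruc]
      split_ifs with h
      · exact hnorm _ (not_inj_shrink θ h.1 h.2 hθ)
      · rfl
    · -- vanishing on `d^0`-pullbacks
      intro φ
      rw [emStruc, if_neg]
      rintro ⟨hc, -⟩
      have : ((coface (0 : Fin (p + 2))).comp φ) 0 = (φ 0).succ := by
        show (0 : Fin (p + 2)).succAbove (φ 0) = _
        rw [Fin.zero_succAbove]
      rw [this] at hc
      exact Fin.succ_ne_zero _ hc
  · -- InjOn
    intro α _ α' _ h
    funext σ
    have := congrFun h (cone σ)
    rwa [emStruc_cone, emStruc_cone] at this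
  · -- SurjOn
    rintro β ⟨⟨hβnorm, hβcoc⟩, hβ0⟩
    refine ⟨fun σ => β (cone σ), ⟨?_, ?_⟩, ?_⟩
    · -- α is normalized
      intro σ hσ
      exact hβnorm _ (not_inj_cone σ hσ)
    · -- α is a cocycle
      intro ψ
      have hb := hβcoc (cone ψ)
      rw [cobdry, Fin.sum_univ_succ] at hb
      rw [cone_comp_coface_zero, hβ0, smul_zero, zero_add] at hb
      have herest : ∀ i : Fin (n + 2),
          β ((cone ψ).comp (coface (m := n + 1) i.succ)) = β (cone (ψ.comp (coface i))) := by
        intro i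
        rw [cone_comp_coface_succ]
      simp only [herest] at hb
      rw [sum_succ_sign (fun i => β (cone (ψ.comp (coface i)))), neg_eq_zero] at hb
      rw [cobdry]
      exact hb
    · -- emStruc α = β
      funext θ
      rw [emStruc]
      split_ifs with h
      · rw [cone_shrink θ h.1 h.2]
      · rw [not_and_or, not_not] at h
        rcases h with h0 | h1
        · rw [← coface_zero_comp_predHom θ h0, hβ0]
        · by_cases h0 : θ 0 = 0
          · symm
            apply hβnorm
            intro hinj
            have : (0 : Fin (n + 2)) = 1 := hinj (by rw [h0, h1])
            exact absurd this (by simp [Fin.ext_iff])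
          · rw [← coface_zero_comp_predHom θ h0, hβ0]
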